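/- Let T be a finite rooted tree with vertex set V, targets a : V → ℝ with a ≥ 0, and positive integer weights w : V → ℕ (w_v ≥ 1). Let T̃ be the chain-expanded tree of (T, w): its vertices are pairs (i, j) with i ∈ V and 1 ≤ j ≤ w_i; for each i and 1 ≤ j < w_i, (i, j) is a child of (i, j+1); for each child k ∈ C(i), the vertex (k, w_k) is a child of (i, 1); and every vertex (i, j) has target value ã_{(i,j)} = a_i. Then the minimum of the unweighted ℓ1 objective ∑_{(i,j)} |ã_{(i,j)} − x̃_{(i,j)}| over feasible assignments x̃ on T̃ equals the minimum of the weighted ℓ1 objective ∑_{i ∈ V} w_i |a_i − x_i| over feasible assignments x on T. -/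

import Mathlib

open Finset
open scoped Classical

/-- A finite rooted tree: a distinguished root and a parent function under which
every vertex eventually reaches the root. -/
structure SBHTree (V : Type*) [Fintype V] [DecidableEq V] where
  root : V
  parent : V → V
  parent_root : parent root = root
  reaches_root : ∀ v : V, ∃ n : ℕ, parent^[n] v = root

/-- The set of children of a vertex `v`. -/
def SBHTree.children {V : Type*} [Fintype V] [DecidableEq V]
    (T : SBHTree V) (v : V) : Finset V :=
  univ.filter (fun u => u ≠ T.root ∧ T.parent u = v)

/-- An assignment is feasible if it is non-negative and the value at each vertex is
at least the sum of the values at its children. -/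
def SBHTree.Feasible {V : Type*} [Fintype V] [DecidableEq V]
    (T : SBHTree V) (x : V → ℝ) : Prop :=
  (∀ v, 0 ≤ x v) ∧ ∀ v, (∑ u ∈ T.children v, x u) ≤ x v


/-- Child relation of the chain-expanded tree `T̃` of `(T, w)`. The chain for
vertex `i` is indexed by `Fin (w i)`, with index `j` representing level `j + 1`:
`(i, j)` is a child of `(i, j + 1)` for `j + 1 < w i`, and for each child
`k ∈ C(i)` in `T`, the top vertex `(k, w k − 1)` of `k`'s chain is a child of the
bottom vertex `(i, 0)` of `i`'s chain. -/
def ExpChild {V : Type*} [Fintype V] [DecidableEq V]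
    (T : SBHTree V) (w : V → ℕ) (c p : Σ i : V, Fin (w i)) : Prop :=
  (c.1 = p.1 ∧ (p.2 : ℕ) = (c.2 : ℕ) + 1) ∨
    ((c.1 ≠ T.root ∧ T.parent c.1 = p.1) ∧ (c.2 : ℕ) = w c.1 - 1 ∧ (p.2 : ℕ) = 0)

/-- Feasibility on the chain-expanded tree: non-negativity and the value at each
vertex is at least the sum of the values at its children. -/
def ExpFeasible {V : Type*} [Fintype V] [DecidableEq V]
    (T : SBHTree V) (w : V → ℕ) (x : (Σ i : V, Fin (w i)) → ℝ) : Prop :=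
  (∀ v, 0 ≤ x v) ∧
    ∀ p : Σ i : V, Fin (w i),
      (∑ c ∈ univ.filter (fun c => ExpChild T w c p), x c) ≤ x p


section Aux

variable {V : Type*} [Fintype V] [DecidableEq V]

lemma sigma_eq_of {w : V → ℕ} (c : Σ i : V, Fin (w i)) (i : V) (m : ℕ)
    (hm : m < w i) (h1 : c.1 = i) (h2 : (c.2 : ℕ) = m) : c = ⟨i, ⟨m, hm⟩⟩ := by
  obtain ⟨c1, c2⟩ := c
  dsimp at h1 h2
  subst h1
  exact congrArg (Sigma.mk c1) (Fin.ext h2)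

lemma clamp_le {lo hi t a : ℝ} (hlh : lo ≤ hi) (h1 : lo ≤ t) (h2 : t ≤ hi) :
    |a - max lo (min a hi)| ≤ |a - t| := by
  rcases le_total a lo with h | h
  · rw [min_eq_left (h.trans hlh), max_eq_left h, abs_of_nonpos (by linarith)]
    linarith [neg_abs_le (a - t)]
  · rcases le_total a hi with h' | h'
    · rw [min_eq_left h', max_eq_right h]
      simpa using abs_nonneg (a - t)
    · rw [min_eq_right h', max_eq_right hlh, abs_of_nonneg (by linarith)]
      linarith [le_abs_self (a - t)]

/-- In the expanded tree, values increase along each chain. -/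
lemma chain_mono (T : SBHTree V) (w : V → ℕ) {xt : (Σ i : V, Fin (w i)) → ℝ}
    (hxt : ExpFeasible T w xt) (i : V) :
    ∀ (j2 : ℕ) (h2 : j2 < w i) (j1 : ℕ) (h1 : j1 ≤ j2),
      xt ⟨i, ⟨j1, lt_of_le_of_lt h1 h2⟩⟩ ≤ xt ⟨i, ⟨j2, h2⟩⟩ := by
  intro j2
  induction j2 with
  | zero =>
    intro h2 j1 h1
    have : j1 = 0 := Nat.le_zero.mp h1
    subst this; exact le_refl _
  | succ n ih =>
    intro h2 j1 h1
    rcases Nat.lt_or_ge j1 (n + 1) with h | h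
    · have hn : n < w i := lt_trans (Nat.lt_succ_self n) h2
      have step : xt ⟨i, ⟨n, hn⟩⟩ ≤ xt ⟨i, ⟨n + 1, h2⟩⟩ := by
        have hmem : (⟨i, ⟨n, hn⟩⟩ : Σ i : V, Fin (w i)) ∈
            univ.filter (fun c => ExpChild T w c ⟨i, ⟨n + 1, h2⟩⟩) := by
          simp [ExpChild]
        calc xt ⟨i, ⟨n, hn⟩⟩
            ≤ ∑ c ∈ univ.filter (fun c => ExpChild T w c ⟨i, ⟨n + 1, h2⟩⟩), xt c :=
              Finset.single_le_sum (fun c _ => hxt.1 c) hmem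
          _ ≤ xt ⟨i, ⟨n + 1, h2⟩⟩ := hxt.2 _
      exact le_trans (ih hn j1 (Nat.lt_succ_iff.mp h)) step
    · have : j1 = n + 1 := le_antisymm h1 h
      subst this
      exact le_refl _


/-- Lifting a feasible assignment to the expanded tree (constant along chains). -/
lemma expand_feasible (T : SBHTree V) (w : V → ℕ) (hw : ∀ v, 1 ≤ w v)
    {x : V → ℝ} (hx : T.Feasible x) : ExpFeasible T w (fun v => x v.1) := by
  refine ⟨fun v => hx.1 v.1, ?_⟩
  rintro ⟨i, j⟩
  rcases Nat.eq_zero_or_pos (j : ℕ) with hj | hj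
  · set e : V → Σ i : V, Fin (w i) :=
      fun k => ⟨k, ⟨w k - 1, Nat.sub_lt (hw k) one_pos⟩⟩ with he
    have hsub : univ.filter (fun c => ExpChild T w c ⟨i, j⟩) ⊆ (T.children i).image e := by
      intro c hc
      rw [mem_filter] at hc
      simp only [ExpChild, mem_univ, true_and] at hc
      rcases hc with ⟨h1, h2⟩ | ⟨⟨h1, h2⟩, h3, h4⟩
      · omega
      · refine Finset.mem_image.mpr ⟨c.1, ?_, ?_⟩
        · simp [SBHTree.children, h1, h2]
        · exact (sigma_eq_of c c.1 _ (Nat.sub_lt (hw c.1) one_pos) rfl h3).symm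
    calc ∑ c ∈ univ.filter (fun c => ExpChild T w c ⟨i, j⟩), x c.1
        ≤ ∑ c ∈ (T.children i).image e, x c.1 :=
          Finset.sum_le_sum_of_subset_of_nonneg hsub (fun c _ _ => hx.1 c.1)
      _ = ∑ k ∈ T.children i, x k := by
          rw [Finset.sum_image]
          intro k1 _ k2 _ hk
          exact congrArg Sigma.fst hk
      _ ≤ x i := hx.2 i
  · have hj1 : (j : ℕ) - 1 < w i := Nat.lt_of_le_of_lt (Nat.sub_le _ _) j.isLt
    have hsub : univ.filter (fun c => ExpChild T w c ⟨i, j⟩) ⊆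
        {(⟨i, ⟨(j : ℕ) - 1, hj1⟩⟩ : Σ i : V, Fin (w i))} := by
      intro c hc
      rw [mem_filter] at hc
      simp only [ExpChild, mem_univ, true_and] at hc
      rcases hc with ⟨h1, h2⟩ | ⟨_, _, h4⟩
      · simp only [Finset.mem_singleton]
        exact sigma_eq_of c i _ hj1 h1 (by omega)
      · omega
    calc ∑ c ∈ univ.filter (fun c => ExpChild T w c ⟨i, j⟩), x c.1
        ≤ ∑ c ∈ {(⟨i, ⟨(j : ℕ) - 1, hj1⟩⟩ : Σ i : V, Fin (w i))}, x c.1 :=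
          Finset.sum_le_sum_of_subset_of_nonneg hsub (fun c _ _ => hx.1 c.1)
      _ = x i := by simp
      _ ≤ x i := le_refl _

/-- Projecting a feasible expanded assignment back to the original tree. -/
lemma project (T : SBHTree V) (w : V → ℕ) (hw : ∀ v, 1 ≤ w v) (a : V → ℝ)
    {xt : (Σ i : V, Fin (w i)) → ℝ} (hxt : ExpFeasible T w xt) :
    ∃ x : V → ℝ, T.Feasible x ∧
      (∑ v, (w v : ℝ) * |a v - x v|) ≤ ∑ v : Σ i : V, Fin (w i), |a v.1 - xt v| := by
  set lo : V → ℝ := fun i => xt ⟨i, ⟨0, hw i⟩⟩ with hlo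
  set hi : V → ℝ := fun i => xt ⟨i, ⟨w i - 1, Nat.sub_lt (hw i) one_pos⟩⟩ with hhi
  have hmono1 : ∀ i (j : Fin (w i)), lo i ≤ xt ⟨i, j⟩ := fun i j =>
    chain_mono T w hxt i j j.isLt 0 (Nat.zero_le _)
  have hmono2 : ∀ i (j : Fin (w i)), xt ⟨i, j⟩ ≤ hi i := fun i j =>
    chain_mono T w hxt i (w i - 1) (Nat.sub_lt (hw i) one_pos) j
      (by have := j.isLt; omega)
  have hlohi : ∀ i, lo i ≤ hi i := fun i => hmono1 i _
  set x : V → ℝ := fun i => max (lo i) (min (a i) (hi i)) with hxdef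
  have hxlo : ∀ i, lo i ≤ x i := fun i => le_max_left _ _
  have hxhi : ∀ i, x i ≤ hi i := fun i =>
    max_le (hlohi i) (min_le_right _ _)
  refine ⟨x, ⟨fun i => le_trans (hxt.1 _) (hxlo i), ?_⟩, ?_⟩
  · intro i
    set e : V → Σ i : V, Fin (w i) :=
      fun k => ⟨k, ⟨w k - 1, Nat.sub_lt (hw k) one_pos⟩⟩ with he
    have hsub : (T.children i).image e ⊆
        univ.filter (fun c => ExpChild T w c ⟨i, ⟨0, hw i⟩⟩) := by
      intro c hc
      obtain ⟨k, hk, rfl⟩ := Finset.mem_image.mp hc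
      simp only [SBHTree.children, mem_filter, mem_univ, true_and] at hk
      simp only [ExpChild, mem_filter, mem_univ, true_and]
      right
      exact ⟨hk, rfl, trivial⟩
    calc ∑ k ∈ T.children i, x k
        ≤ ∑ k ∈ T.children i, hi k := Finset.sum_le_sum (fun k _ => hxhi k)
      _ = ∑ c ∈ (T.children i).image e, xt c := by
          rw [Finset.sum_image]
          intro k1 _ k2 _ hk
          exact congrArg Sigma.fst hk
      _ ≤ ∑ c ∈ univ.filter (fun c => ExpChild T w c ⟨i, ⟨0, hw i⟩⟩), xt c :=
          Finset.sum_le_sum_of_subset_of_nonneg hsub (fun c _ _ => hxt.1 c)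
      _ ≤ lo i := hxt.2 _
      _ ≤ x i := hxlo i
  · rw [← Finset.univ_sigma_univ, Finset.sum_sigma]
    refine Finset.sum_le_sum (fun i _ => ?_)
    calc (w i : ℝ) * |a i - x i|
        = ∑ _j : Fin (w i), |a i - x i| := by
          simp [Finset.sum_const, nsmul_eq_mul]
      _ ≤ ∑ j : Fin (w i), |a i - xt ⟨i, j⟩| :=
          Finset.sum_le_sum (fun j _ =>
            clamp_le (hlohi i) (hmono1 i j) (hmono2 i j))

end Aux

theorem stmt_14 {V : Type*} [Fintype V] [DecidableEq V] (T : SBHTree V)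
    (a : V → ℝ) (ha : ∀ v, 0 ≤ a v)
    (w : V → ℕ) (hw : ∀ v, 1 ≤ w v) :
    sInf {c : ℝ | ∃ xt : (Σ i : V, Fin (w i)) → ℝ, ExpFeasible T w xt ∧
        (∑ v : Σ i : V, Fin (w i), |a v.1 - xt v|) = c}
      = sInf {c : ℝ | ∃ x : V → ℝ, T.Feasible x ∧
          (∑ v, (w v : ℝ) * |a v - x v|) = c} := by
  set A := {c : ℝ | ∃ xt : (Σ i : V, Fin (w i)) → ℝ, ExpFeasible T w xt ∧
      (∑ v : Σ i : V, Fin (w i), |a v.1 - xt v|) = c} with hA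
  set B := {c : ℝ | ∃ x : V → ℝ, T.Feasible x ∧
      (∑ v, (w v : ℝ) * |a v - x v|) = c} with hB
  have hsum : ∀ x : V → ℝ,
      (∑ v : Σ i : V, Fin (w i), |a v.1 - x v.1|) = ∑ v, (w v : ℝ) * |a v - x v| := by
    intro x
    rw [← Finset.univ_sigma_univ, Finset.sum_sigma]
    simp [Finset.sum_const, nsmul_eq_mul]
  have hA_bdd : BddBelow A := by
    refine ⟨0, fun c hc => ?_⟩
    obtain ⟨xt, _, rfl⟩ := hc
    exact Finset.sum_nonneg (fun v _ => abs_nonneg _)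
  have hB_bdd : BddBelow B := by
    refine ⟨0, fun c hc => ?_⟩
    obtain ⟨x, _, rfl⟩ := hc
    exact Finset.sum_nonneg (fun v _ => mul_nonneg (Nat.cast_nonneg _) (abs_nonneg _))
  have hzero : T.Feasible (fun _ => (0 : ℝ)) := ⟨fun _ => le_refl 0, fun v => by simp⟩
  have hB_ne : B.Nonempty := ⟨_, fun _ => (0 : ℝ), hzero, rfl⟩
  have hA_ne : A.Nonempty :=
    ⟨_, fun v => (fun _ => (0 : ℝ)) v.1, expand_feasible T w hw hzero, rfl⟩
  have hBA : B ⊆ A := by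
    rintro c ⟨x, hx, rfl⟩
    exact ⟨fun v => x v.1, expand_feasible T w hw hx, hsum x⟩
  refine le_antisymm (csInf_le_csInf hA_bdd hB_ne hBA) (le_csInf hA_ne ?_)
  rintro c ⟨xt, hxt, rfl⟩
  obtain ⟨x, hx, hbound⟩ := project T w hw a hxt
  exact le_trans (csInf_le hB_bdd ⟨x, hx, rfl⟩) hbound
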